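/- Let 0 < ρ < 1 and let (z_n)_{n≥1} be a sequence of positive real numbers with ∑_{n=1}^∞ z_n^{-ρ} < ∞, and let f : ℂ → ℂ be the entire function f(z) = ∏_{n=1}^∞ (1 + z/z_n). Then ∫_0^∞ (f'(x)/f(x)) · x^{-ρ} dx = Γ(1-ρ) · Γ(ρ) · ∑_{n=1}^∞ z_n^{-ρ} < ∞. -/

import Mathlib

open MeasureTheory Real Set

open Filter


lemma beta_real (ρ : ℝ) (hρ0 : 0 < ρ) (hρ1 : ρ < 1) :
    IntegrableOn (fun t : ℝ => t ^ (-ρ) * (1 - t) ^ (ρ - 1)) (Ioo (0:ℝ) 1) ∧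
    ∫ t in Ioo (0:ℝ) 1, t ^ (-ρ) * (1 - t) ^ (ρ - 1)
      = Real.Gamma (1 - ρ) * Real.Gamma ρ := by
  have hu : 0 < Complex.re ((1 : ℂ) - ρ) := by simp [hρ1]
  have hv : 0 < Complex.re (ρ : ℂ) := by simpa using hρ0
  set c : ℝ → ℂ := fun t : ℝ => (t:ℂ) ^ ((1:ℂ) - ρ - 1) * ((1:ℂ) - t) ^ ((ρ:ℂ) - 1) with hc
  have hconv : IntegrableOn c (Ioo (0:ℝ) 1) := by
    have := (intervalIntegrable_iff_integrableOn_Ioc_of_le zero_le_one).mp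
      (Complex.betaIntegral_convergent hu hv)
    exact this.mono_set Ioo_subset_Ioc_self
  have hcongr : ∀ t ∈ Ioo (0:ℝ) 1,
      c t = ((t ^ (-ρ) * (1 - t) ^ (ρ - 1) : ℝ) : ℂ) := by
    intro t ht
    rw [hc]
    simp only
    rw [show ((1:ℂ) - ρ - 1) = ((-ρ : ℝ) : ℂ) by push_cast; ring,
      show ((ρ:ℂ) - 1) = ((ρ - 1 : ℝ) : ℂ) by push_cast; ring,
      show ((1:ℂ) - t) = ((1 - t : ℝ) : ℂ) by push_cast; ring,
      ← Complex.ofReal_cpow ht.1.le, ← Complex.ofReal_cpow (by linarith [ht.2]),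
      ← Complex.ofReal_mul]
  have hint : IntegrableOn (fun t : ℝ => t ^ (-ρ) * (1 - t) ^ (ρ - 1)) (Ioo (0:ℝ) 1) := by
    have h2 : IntegrableOn (fun x => RCLike.re (c x)) (Ioo (0:ℝ) 1) := hconv.re
    refine MeasureTheory.IntegrableOn.congr_fun h2 (fun t ht => ?_) measurableSet_Ioo
    rw [hcongr t ht]
    simp
  refine ⟨hint, ?_⟩
  apply Complex.ofReal_injective
  have hval : (Complex.Gamma ((1:ℂ) - ρ)) * Complex.Gamma ρ
      = ∫ t in Ioo (0:ℝ) 1, c t := by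
    rw [Complex.Gamma_mul_Gamma_eq_betaIntegral hu hv]
    rw [show ((1:ℂ) - ρ + ρ) = 1 by ring, Complex.Gamma_one, one_mul]
    rw [Complex.betaIntegral, intervalIntegral.integral_of_le zero_le_one,
      integral_Ioc_eq_integral_Ioo]
  have : (∫ t in Ioo (0:ℝ) 1, c t)
      = ((∫ t in Ioo (0:ℝ) 1, t ^ (-ρ) * (1 - t) ^ (ρ - 1) : ℝ) : ℂ) := by
    rw [setIntegral_congr_fun measurableSet_Ioo hcongr]
    exact integral_ofReal
  rw [Complex.ofReal_mul, ← Complex.Gamma_ofReal, ← Complex.Gamma_ofReal,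
    Complex.ofReal_sub, Complex.ofReal_one, hval, this]

lemma key_int (ρ : ℝ) (hρ0 : 0 < ρ) (hρ1 : ρ < 1) {a : ℝ} (ha : 0 < a) :
    IntegrableOn (fun x : ℝ => x ^ (-ρ) / (x + a)) (Ioi 0) ∧
    ∫ x in Ioi (0:ℝ), x ^ (-ρ) / (x + a)
      = Real.Gamma (1 - ρ) * Real.Gamma ρ * a ^ (-ρ) := by
  set φ : ℝ → ℝ := fun t => a * t / (1 - t) with hφ
  set φ' : ℝ → ℝ := fun t => a / (1 - t) ^ 2 with hφ'
  have hder : ∀ t ∈ Ioo (0:ℝ) 1, HasDerivWithinAt φ (φ' t) (Ioo (0:ℝ) 1) t := by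
    intro t ht
    have h1 : (1 - t) ≠ 0 := by
      have := ht.2; intro h; nlinarith
    have : HasDerivAt φ (φ' t) t := by
      have h2 : HasDerivAt (fun t : ℝ => a * t) a t := by
        simpa using (hasDerivAt_id t).const_mul a
      have h3 : HasDerivAt (fun t : ℝ => 1 - t) (-1) t := by
        simpa using ((hasDerivAt_id t).const_sub 1)
      have := h2.div h3 h1
      refine this.congr_deriv ?_
      rw [hφ']
      field_simp
      ring
    exact this.hasDerivWithinAt
  have hinj : InjOn φ (Ioo (0:ℝ) 1) := by
    intro s hs t ht h
    have h1 : (1 - s) ≠ 0 := by have := hs.2; intro h; nlinarith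
    have h2 : (1 - t) ≠ 0 := by have := ht.2; intro h; nlinarith
    rw [hφ] at h
    field_simp at h
    nlinarith [ha]
  have himg : φ '' (Ioo (0:ℝ) 1) = Ioi (0:ℝ) := by
    ext y
    simp only [mem_image, mem_Ioi, mem_Ioo]
    constructor
    · rintro ⟨t, ⟨ht0, ht1⟩, rfl⟩
      have : 0 < 1 - t := by linarith
      positivity
    · intro hy
      refine ⟨y / (y + a), ⟨by positivity, ?_⟩, ?_⟩
      · rw [div_lt_one (by positivity)]; linarith
      · rw [hφ]
        have hya : y + a ≠ 0 := by positivity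
        field_simp
        rw [add_sub_cancel_left, div_self ha.ne']
  have hident : ∀ t ∈ Ioo (0:ℝ) 1,
      |φ' t| • ((φ t) ^ (-ρ) / (φ t + a))
        = a ^ (-ρ) * (t ^ (-ρ) * (1 - t) ^ (ρ - 1)) := by
    intro t ht
    have ht0 : 0 < t := ht.1
    have hb : 0 < 1 - t := by linarith [ht.2]
    have hφt : φ t = a * t / (1 - t) := rfl
    have hφa : φ t + a = a / (1 - t) := by
      rw [hφt]; field_simp; ring
    have hrw : (φ t) ^ (-ρ) = a ^ (-ρ) * t ^ (-ρ) * (1 - t) ^ ρ := by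
      rw [hφt, Real.div_rpow (by positivity) hb.le,
        Real.mul_rpow ha.le ht0.le, Real.rpow_neg hb.le, div_inv_eq_mul]
    have habs : |φ' t| = a / (1 - t) ^ 2 := by
      rw [hφ']; rw [abs_of_pos (by positivity)]
    rw [smul_eq_mul, habs, hrw, hφa, Real.rpow_sub_one hb.ne']
    field_simp
  have hbeta := beta_real ρ hρ0 hρ1
  constructor
  · rw [← himg]
    rw [integrableOn_image_iff_integrableOn_abs_deriv_smul measurableSet_Ioo hder hinj]
    refine MeasureTheory.IntegrableOn.congr_fun ((hbeta.1.const_mul (a ^ (-ρ)))) ?_ measurableSet_Ioo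
    intro t ht
    exact (hident t ht).symm
  · rw [← himg, integral_image_eq_integral_abs_deriv_smul measurableSet_Ioo hder hinj]
    rw [setIntegral_congr_fun measurableSet_Ioo hident]
    rw [integral_const_mul, hbeta.2]
    ring

lemma logderiv_eq (ρ : ℝ) (hρ0 : 0 < ρ)
    (z : ℕ → ℝ) (hz : ∀ n, 0 < z n)
    (hsum : Summable fun n => (z n) ^ (-ρ))
    (hz1 : Summable fun n => 1 / z n)
    (f : ℂ → ℂ) (hf : ∀ s : ℂ, f s = ∏' n, (1 + s / (z n : ℂ)))
    {x : ℝ} (hx : 0 < x) :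
    deriv f (x : ℂ) / f (x : ℂ) = ((∑' n, 1 / (x + z n) : ℝ) : ℂ) := by
  set U : Set ℂ := Metric.ball (x : ℂ) (x / 2) with hU
  have hUopen : IsOpen U := Metric.isOpen_ball
  have hxU : (x : ℂ) ∈ U := Metric.mem_ball_self (by positivity)
  have hre : ∀ s ∈ U, x / 2 < s.re := by
    intro s hs
    have h1 : dist s (x : ℂ) < x / 2 := hs
    have h2 : |(s - (x:ℂ)).re| ≤ ‖s - x‖ := Complex.abs_re_le_norm _
    rw [Complex.dist_eq] at h1
    have h0 : (s - (x:ℂ)).re = s.re - x := by simp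
    rw [h0] at h2
    have h3 := lt_of_le_of_lt h2 h1
    have h4 := abs_lt.mp h3
    linarith [h4.1]
  have hnorm : ∀ s ∈ U, ‖s‖ ≤ 3 * x / 2 := by
    intro s hs
    have h1 : dist s (x : ℂ) < x / 2 := hs
    calc ‖s‖ = ‖s - (x:ℂ) + (x:ℂ)‖ := by ring_nf
    _ ≤ ‖s - (x:ℂ)‖ + ‖(x:ℂ)‖ := norm_add_le _ _
    _ ≤ x / 2 + x := by
        rw [Complex.dist_eq] at h1
        have : ‖(x:ℂ)‖ = x := by
          rw [Complex.norm_real, Real.norm_eq_abs, abs_of_pos hx]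
        rw [this]
        exact add_le_add h1.le le_rfl
    _ = 3 * x / 2 := by ring
  have hzne : ∀ n, ((z n : ℝ) : ℂ) ≠ 0 := fun n => by
    exact_mod_cast Complex.ofReal_ne_zero.mpr (hz n).ne'
  have hre_fac : ∀ s ∈ U, ∀ n, 0 < (1 + s / (z n : ℂ)).re := by
    intro s hs n
    have : s / (z n : ℂ) = ((z n)⁻¹ : ℝ) * s := by
      push_cast
      rw [div_eq_inv_mul]
    rw [Complex.add_re, Complex.one_re, this, Complex.re_ofReal_mul]
    have h1 : 0 < s.re := lt_trans (by positivity) (hre s hs)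
    have h2 : (0:ℝ) < (z n)⁻¹ := by
      have := hz n; positivity
    have := mul_pos h2 h1
    linarith
  have hslit : ∀ s ∈ U, ∀ n, (1 + s / (z n : ℂ)) ∈ Complex.slitPlane :=
    fun s hs n => Or.inl (hre_fac s hs n)
  have hne0 : ∀ s ∈ U, ∀ n, (1 + s / (z n : ℂ)) ≠ 0 :=
    fun s hs n => Complex.slitPlane_ne_zero (hslit s hs n)
  set F : ℕ → ℂ → ℂ := fun n s => Complex.log (1 + s / (z n : ℂ)) with hF
  set g : ℂ → ℂ := fun s => ∑' n, F n s with hg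
  set u : ℕ → ℝ := fun n => 3 * x * (1 / z n) with hu_def
  have hu : Summable u := hz1.mul_left _
  have hbig : ∀ᶠ n in cofinite, 3 * x ≤ z n := by
    have h3x : (0:ℝ) < (3 * x) ^ (-ρ) := Real.rpow_pos_of_pos (by positivity) _
    have h1 := hsum.tendsto_cofinite_zero.eventually (gt_mem_nhds h3x)
    filter_upwards [h1] with n hn
    by_contra hcon
    push_neg at hcon
    exact absurd (Real.rpow_le_rpow_of_nonpos (hz n) hcon.le (by linarith)) (not_le.mpr hn)
  have hcof : ∀ᶠ n in cofinite, ∀ s ∈ U, ‖F n s‖ ≤ u n := by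
    filter_upwards [hbig] with n hn s hs
    have hzn : 0 < z n := hz n
    have hw : ‖s / (z n : ℂ)‖ = ‖s‖ / z n := by
      rw [norm_div, Complex.norm_real, Real.norm_eq_abs, abs_of_pos hzn]
    have hw2 : ‖s / (z n : ℂ)‖ ≤ 1 / 2 := by
      rw [hw]
      rw [div_le_div_iff₀ hzn (by norm_num)]
      have := hnorm s hs
      nlinarith
    have := Complex.norm_log_one_add_half_le_self hw2
    rw [hF]
    refine this.trans ?_
    rw [hw, hu_def]
    show 3 / 2 * (‖s‖ / z n) ≤ 3 * x * (1 / z n)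
    have e1 : 3 / 2 * (‖s‖ / z n) = 3 / 2 * ‖s‖ / z n := by ring
    have e2 : 3 * x * (1 / z n) = 3 * x / z n := by ring
    rw [e1, e2, div_le_div_iff₀ hzn hzn]
    nlinarith [hnorm s hs]
  have hdiffF : ∀ n, DifferentiableOn ℂ (F n) U := by
    intro n s hs
    have h1 : DifferentiableAt ℂ (fun s : ℂ => 1 + s / (z n : ℂ)) s :=
      (differentiableAt_id.div_const _).const_add 1
    exact (h1.clog (hslit s hs n)).differentiableWithinAt
  have hdiffsum : ∀ᶠ t : Finset ℕ in atTop,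
      DifferentiableOn ℂ (fun s => ∑ n ∈ t, F n s) U :=
    Eventually.of_forall fun t => DifferentiableOn.fun_sum fun n _ => hdiffF n
  have hloc : TendstoLocallyUniformlyOn (fun (t : Finset ℕ) s => ∑ n ∈ t, F n s) g atTop U :=
    (tendstoUniformlyOn_tsum_of_cofinite_eventually hu hcof).tendstoLocallyUniformlyOn
  have hgdiff : DifferentiableOn ℂ g U := hloc.differentiableOn hdiffsum hUopen
  have hderivtendsto := (hloc.deriv hdiffsum hUopen).tendsto_at hxU
  have derivF : ∀ n, ∀ s ∈ U, HasDerivAt (F n) (1 / (s + z n)) s := by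
    intro n s hs
    have h1 : HasDerivAt (fun s : ℂ => 1 + s / (z n : ℂ)) (1 / (z n : ℂ)) s := by
      simpa using ((hasDerivAt_id s).div_const ((z n : ℝ) : ℂ)).const_add 1
    have h2 := h1.clog (hslit s hs n)
    convert h2 using 1
    have hzn := hzne n
    rw [div_div]
    congr 1
    field_simp [hzn]
    ring
  have hsum_deriv : HasSum (fun n => 1 / ((x:ℂ) + z n)) (deriv g x) := by
    rw [HasSum]
    apply hderivtendsto.congr
    intro t
    have hd : HasDerivAt (fun s => ∑ n ∈ t, F n s) (∑ n ∈ t, (1 / ((x:ℂ) + z n))) (x:ℂ) :=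
      HasDerivAt.fun_sum fun n _ => derivF n _ hxU
    exact hd.deriv
  have rsum : Summable (fun n => 1 / (x + z n)) := by
    refine Summable.of_nonneg_of_le (fun n => ?_) (fun n => ?_) hz1
    · have := hz n
      positivity
    · apply one_div_le_one_div_of_le (hz n)
      linarith
  have hderivg : deriv g (x:ℂ) = ((∑' n, 1 / (x + z n) : ℝ) : ℂ) := by
    have h1 : HasSum (fun n => ((1 / (x + z n) : ℝ) : ℂ)) ((∑' n, 1 / (x + z n) : ℝ) : ℂ) :=
      Complex.hasSum_ofReal.mpr rsum.hasSum
    have h2 : (fun n => ((1 / (x + z n) : ℝ) : ℂ)) = fun n => 1 / ((x:ℂ) + z n) := by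
      funext n; push_cast; ring
    rw [h2] at h1
    exact hsum_deriv.unique h1
  have hexp : ∀ s ∈ U, f s = Complex.exp (g s) := by
    intro s hs
    have hsummable : Summable fun n => F n s := by
      apply Summable.of_norm_bounded_eventually hu
      filter_upwards [hcof] with n hn using hn s hs
    have hprod : HasProd (fun n => 1 + s / (z n : ℂ)) (Complex.exp (g s)) := by
      have hfun : (Complex.exp ∘ fun n => F n s) = fun n => 1 + s / (z n : ℂ) :=
        funext fun n => Complex.exp_log (hne0 s hs n)
      have h1 := hsummable.hasSum.cexp
      rwa [hfun] at h1
    rw [hf s, hprod.tprod_eq]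
  have hfeq : f =ᶠ[nhds (x:ℂ)] fun s => Complex.exp (g s) :=
    eventuallyEq_of_mem (hUopen.mem_nhds hxU) hexp
  have hgd : HasDerivAt g (deriv g (x:ℂ)) (x:ℂ) :=
    (hgdiff.differentiableAt (hUopen.mem_nhds hxU)).hasDerivAt
  have hd : HasDerivAt (fun s => Complex.exp (g s)) (Complex.exp (g (x:ℂ)) * deriv g (x:ℂ)) (x:ℂ) :=
    hgd.cexp
  rw [hfeq.deriv_eq, hd.deriv, hexp _ hxU, hderivg,
    mul_div_cancel_left₀ _ (Complex.exp_ne_zero _)]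

/-- For `f(z) = ∏ (1 + z/zₙ)` with positive `zₙ` and `∑ zₙ^(-ρ) < ∞`, `0 < ρ < 1`:
`∫_0^∞ (f'(x)/f(x)) x^(-ρ) dx = Γ(1-ρ) Γ(ρ) ∑ zₙ^(-ρ) < ∞`. -/
theorem stmt_6 (ρ : ℝ) (hρ0 : 0 < ρ) (hρ1 : ρ < 1)
    (z : ℕ → ℝ) (hz : ∀ n, 0 < z n)
    (hsum : Summable fun n => (z n) ^ (-ρ))
    (f : ℂ → ℂ) (hf : ∀ s : ℂ, f s = ∏' n, (1 + s / (z n : ℂ))) :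
    IntegrableOn (fun x : ℝ => (deriv f (x : ℂ) / f (x : ℂ)).re * x ^ (-ρ)) (Ioi 0) ∧
    ∫ x in Ioi (0 : ℝ), (deriv f (x : ℂ) / f (x : ℂ)).re * x ^ (-ρ)
      = Real.Gamma (1 - ρ) * Real.Gamma ρ * ∑' n, (z n) ^ (-ρ) := by
  set c : ℝ := Real.Gamma (1 - ρ) * Real.Gamma ρ with hc
  have hc0 : 0 < c := mul_pos (Real.Gamma_pos_of_pos (by linarith)) (Real.Gamma_pos_of_pos hρ0)
  have hS0 : 0 ≤ ∑' n, (z n) ^ (-ρ) := tsum_nonneg fun n => (Real.rpow_pos_of_pos (hz n) _).le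
  -- summability of 1 / z n
  have hz1 : Summable fun n => 1 / z n := by
    apply Summable.of_norm_bounded_eventually hsum
    have h1 : ∀ᶠ n in cofinite, (z n) ^ (-ρ) < 1 :=
      hsum.tendsto_cofinite_zero.eventually (gt_mem_nhds one_pos)
    filter_upwards [h1] with n hn
    have hzn := hz n
    have h2 : 1 ≤ z n := by
      by_contra hcon
      push_neg at hcon
      have := Real.rpow_le_rpow_of_nonpos hzn hcon.le (by linarith : -ρ ≤ 0)
      simp only [Real.one_rpow] at this
      linarith
    rw [Real.norm_eq_abs, abs_of_pos (by positivity : (0:ℝ) < 1 / z n), one_div,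
      ← Real.rpow_neg_one]
    exact Real.rpow_le_rpow_of_exponent_le h2 (by linarith)
  set G : ℕ → ℝ → ℝ := fun n x => x ^ (-ρ) / (x + z n) with hG
  have hGnn : ∀ n, ∀ x ∈ Ioi (0:ℝ), 0 ≤ G n x := by
    intro n x hx
    have h1 := hz n
    have h2 : (0:ℝ) < x := hx
    positivity
  have hGmeas : ∀ n, Measurable (G n) := by
    intro n
    exact (measurable_id.pow measurable_const).div (measurable_id.add_const _)
  have hGint : ∀ n, IntegrableOn (G n) (Ioi 0) := fun n => (key_int ρ hρ0 hρ1 (hz n)).1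
  have hGval : ∀ n, ∫ x in Ioi (0:ℝ), G n x = c * (z n) ^ (-ρ) :=
    fun n => (key_int ρ hρ0 hρ1 (hz n)).2
  -- summability at each point
  have hsumG : ∀ x : ℝ, 0 < x → Summable fun n => G n x := by
    intro x hx
    have h1 : Summable fun n => x ^ (-ρ) * (1 / z n) := hz1.mul_left _
    apply Summable.of_nonneg_of_le (fun n => hGnn n x hx) (fun n => ?_) h1
    rw [hG]
    simp only
    rw [div_eq_mul_one_div]
    apply mul_le_mul_of_nonneg_left _ (Real.rpow_nonneg hx.le _)
    apply one_div_le_one_div_of_le (hz n)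
    linarith
  -- the measurable representative
  set h₁ : ℝ → ℝ := fun x => (∑' n, ENNReal.ofReal (G n x)).toReal with hh₁
  have hh₁meas : Measurable h₁ :=
    (Measurable.ennreal_tsum fun n => (hGmeas n).ennreal_ofReal).ennreal_toReal
  have hfin : ∀ x : ℝ, 0 < x → (∑' n, ENNReal.ofReal (G n x)) ≠ ⊤ := by
    intro x hx
    rw [← ENNReal.ofReal_tsum_of_nonneg (fun n => hGnn n x hx) (hsumG x hx)]
    exact ENNReal.ofReal_ne_top
  have hh₁eq : ∀ x : ℝ, 0 < x → h₁ x = ∑' n, G n x := by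
    intro x hx
    rw [hh₁]
    simp only
    rw [← ENNReal.ofReal_tsum_of_nonneg (fun n => hGnn n x hx) (hsumG x hx),
      ENNReal.toReal_ofReal (tsum_nonneg (fun n => hGnn n x hx))]
  -- the target integrand agrees with h₁ on Ioi 0
  have hagree : ∀ x ∈ Ioi (0:ℝ),
      (deriv f (x : ℂ) / f (x : ℂ)).re * x ^ (-ρ) = h₁ x := by
    intro x hx
    have hx0 : (0:ℝ) < x := hx
    rw [logderiv_eq ρ hρ0 z hz hsum hz1 f hf hx0, Complex.ofReal_re, hh₁eq x hx0,
      ← tsum_mul_right]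
    congr 1
    funext n
    rw [hG]
    simp only
    rw [one_div, inv_mul_eq_div]
  have hlint : ∫⁻ x in Ioi (0:ℝ), ENNReal.ofReal (h₁ x)
      = ENNReal.ofReal (c * ∑' n, (z n) ^ (-ρ)) := by
    have e1 : ∫⁻ x in Ioi (0:ℝ), ENNReal.ofReal (h₁ x)
        = ∫⁻ x in Ioi (0:ℝ), ∑' n, ENNReal.ofReal (G n x) := by
      apply lintegral_congr_ae
      rw [Filter.EventuallyEq, ae_restrict_iff' measurableSet_Ioi]
      filter_upwards with x hx
      rw [hh₁]
      simp only
      rw [ENNReal.ofReal_toReal (hfin x hx)]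
    rw [e1, lintegral_tsum (fun n => ((hGmeas n).ennreal_ofReal).aemeasurable)]
    have e2 : ∀ n, ∫⁻ x in Ioi (0:ℝ), ENNReal.ofReal (G n x)
        = ENNReal.ofReal (c * (z n) ^ (-ρ)) := by
      intro n
      rw [← ofReal_integral_eq_lintegral_ofReal (hGint n)
        ((ae_restrict_iff' measurableSet_Ioi).2 (ae_of_all _ (fun x hx => hGnn n x hx))),
        hGval n]
    simp_rw [e2]
    rw [← ENNReal.ofReal_tsum_of_nonneg
      (fun n => mul_nonneg hc0.le (Real.rpow_nonneg (hz n).le _)) (hsum.mul_left c),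
      tsum_mul_left]
  have h₁nn : 0 ≤ᵐ[volume.restrict (Ioi (0:ℝ))] h₁ :=
    ae_of_all _ (fun x => ENNReal.toReal_nonneg)
  have h₁int : IntegrableOn h₁ (Ioi 0) := by
    refine ⟨hh₁meas.aestronglyMeasurable, ?_⟩
    rw [hasFiniteIntegral_iff_ofReal h₁nn, hlint]
    exact ENNReal.ofReal_lt_top
  have h₁val : ∫ x in Ioi (0:ℝ), h₁ x = c * ∑' n, (z n) ^ (-ρ) := by
    rw [integral_eq_lintegral_of_nonneg_ae h₁nn hh₁meas.aestronglyMeasurable, hlint,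
      ENNReal.toReal_ofReal (mul_nonneg hc0.le hS0)]
  constructor
  · exact MeasureTheory.IntegrableOn.congr_fun h₁int
      (fun x hx => (hagree x hx).symm) measurableSet_Ioi
  · rw [setIntegral_congr_fun measurableSet_Ioi hagree, h₁val, hc]
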